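/- Let K be a field and q ∈ K an element that is not a root of unity. In the quantum plane B = B(q), let J = B(a−1) and W = B/J, and for n ≥ 0 let w_n = bⁿ + J and W_n = B·w_n. Then W = W_0 ⊋ W_1 ⊋ W_2 ⊋ ⋯ is a strictly descending chain, and every nonzero B-submodule of W equals W_n for some n ≥ 0; in particular the submodules of W are linearly ordered by inclusion. -/

import Mathlib

noncomputable section

open FreeAlgebra

/-- Defining relation of the quantum plane `B(q)`: `a * b = q • (b * a)`, where
`ι K 0` plays the role of `a` and `ι K 1` plays the role of `b`. -/
inductive QuantumPlaneRel (K : Type) [Field K] (q : K) :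
    FreeAlgebra K (Fin 2) → FreeAlgebra K (Fin 2) → Prop
  | rel : QuantumPlaneRel K q (ι K (0 : Fin 2) * ι K (1 : Fin 2))
      (q • (ι K (1 : Fin 2) * ι K (0 : Fin 2)))

/-- The coordinate algebra of the quantum plane `B(q)`. -/
abbrev QuantumPlane (K : Type) [Field K] (q : K) : Type :=
  RingQuot (QuantumPlaneRel K q)

/-- The generator `a` of the quantum plane. -/
def QuantumPlane.a (K : Type) [Field K] (q : K) : QuantumPlane K q :=
  RingQuot.mkAlgHom K (QuantumPlaneRel K q) (ι K (0 : Fin 2))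

/-- The generator `b` of the quantum plane. -/
def QuantumPlane.b (K : Type) [Field K] (q : K) : QuantumPlane K q :=
  RingQuot.mkAlgHom K (QuantumPlaneRel K q) (ι K (1 : Fin 2))

namespace QPaux

variable (K : Type) [Field K] (q : K)

/-- Shift operator `single n c ↦ single (n+1) c`. -/
def S : (ℕ →₀ K) →ₗ[K] (ℕ →₀ K) := Finsupp.lmapDomain K K Nat.succ

/-- Diagonal operator `single n c ↦ single n (q^n c)`. -/
def A : (ℕ →₀ K) →ₗ[K] (ℕ →₀ K) := Finsupp.lsum K fun n => q ^ n • Finsupp.lsingle n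

@[simp] lemma S_single (n : ℕ) (c : K) :
    S K (Finsupp.single n c) = Finsupp.single (n + 1) c := by
  simp [S, Finsupp.mapDomain_single, Nat.succ_eq_add_one]

@[simp] lemma A_single (n : ℕ) (c : K) :
    A K q (Finsupp.single n c) = Finsupp.single n (q ^ n * c) := by
  simp [A, Finsupp.smul_single, smul_eq_mul]

lemma A_apply (f : ℕ →₀ K) (k : ℕ) : A K q f k = q ^ k * f k := by
  induction f using Finsupp.induction_linear with
  | zero => simp
  | add f g hf hg => simp [hf, hg, mul_add]
  | single n c =>
    rcases eq_or_ne n k with rfl | h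
    · simp
    · simp [Finsupp.single_eq_of_ne' h]

lemma S_apply_succ (f : ℕ →₀ K) (k : ℕ) : S K f (k + 1) = f k := by
  simpa [S, Finsupp.lmapDomain_apply] using
    Finsupp.mapDomain_apply Nat.succ_injective f k

lemma S_apply_zero (f : ℕ →₀ K) : S K f 0 = 0 := by
  have : (0 : ℕ) ∉ Set.range Nat.succ := by simp [Nat.succ_ne_zero, eq_comm]
  simpa [S, Finsupp.lmapDomain_apply] using Finsupp.mapDomain_notin_range f 0 this

/-- The free-algebra lift sending `ι 0 ↦ A`, `ι 1 ↦ S`. -/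
def F : FreeAlgebra K (Fin 2) →ₐ[K] Module.End K (ℕ →₀ K) :=
  FreeAlgebra.lift K (fun i : Fin 2 => if i = 0 then A K q else S K)

lemma F_rel : ∀ x y, QuantumPlaneRel K q x y → F K q x = F K q y := by
  rintro _ _ ⟨⟩
  have h0 : F K q (ι K (0 : Fin 2)) = A K q := by simp [F]
  have h1 : F K q (ι K (1 : Fin 2)) = S K := by simp [F]
  rw [map_mul, map_smul, map_mul, h0, h1]
  refine Finsupp.lhom_ext (fun n c => ?_)
  simp only [Module.End.mul_apply, LinearMap.smul_apply, S_single, A_single,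
    Finsupp.smul_single, smul_eq_mul]
  congr 1
  ring

/-- The representation of the quantum plane on `ℕ →₀ K`. -/
def ρ : QuantumPlane K q →ₐ[K] Module.End K (ℕ →₀ K) :=
  RingQuot.liftAlgHom K ⟨F K q, F_rel K q⟩

@[simp] lemma ρ_a : ρ K q (QuantumPlane.a K q) = A K q := by
  simp [ρ, QuantumPlane.a, RingQuot.liftAlgHom_mkAlgHom_apply, F]

@[simp] lemma ρ_b : ρ K q (QuantumPlane.b K q) = S K := by
  simp [ρ, QuantumPlane.b, RingQuot.liftAlgHom_mkAlgHom_apply, F]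

end QPaux

namespace QPaux

variable (K : Type) [Field K] (q : K)

/-- Type synonym of `ℕ →₀ K` carrying the quantum-plane module structure. -/
def Mq (K : Type) [Field K] (q : K) : Type := ℕ →₀ K

instance : AddCommGroup (Mq K q) := inferInstanceAs (AddCommGroup (ℕ →₀ K))

instance : Module K (Mq K q) := inferInstanceAs (Module K (ℕ →₀ K))

instance : Module (QuantumPlane K q) (Mq K q) :=
  Module.compHom (ℕ →₀ K) (ρ K q).toRingHom

lemma smul_mq (x : QuantumPlane K q) (f : Mq K q) :
    x • f = ρ K q x (f : ℕ →₀ K) := rfl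

lemma a_smul_mq (f : Mq K q) :
    QuantumPlane.a K q • f = A K q (f : ℕ →₀ K) := by rw [smul_mq, ρ_a]

lemma b_smul_mq (f : Mq K q) :
    QuantumPlane.b K q • f = S K (f : ℕ →₀ K) := by rw [smul_mq, ρ_b]

lemma algebraMap_smul_mq (c : K) (f : Mq K q) :
    algebraMap K (QuantumPlane K q) c • f = c • f := by
  rw [smul_mq, AlgHom.commutes]
  rfl

/-- `x ↦ x • w₀`. -/
def ψ : QuantumPlane K q →ₗ[QuantumPlane K q] Mq K q where
  toFun x := ρ K q x (Finsupp.single 0 1)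
  map_add' x y := by simp [map_add]; rfl
  map_smul' c x := by
    simp only [smul_eq_mul, map_mul, RingHom.id_apply]
    rfl

lemma S_pow_single (j n : ℕ) (c : K) :
    ((S K) ^ j) (Finsupp.single n c) = Finsupp.single (n + j) c := by
  induction j with
  | zero => simp
  | succ j ih =>
    rw [pow_succ', Module.End.mul_apply, ih, S_single]
    rfl

lemma ψ_pow_b (n : ℕ) :
    ψ K q (QuantumPlane.b K q ^ n) = (Finsupp.single n 1 : Mq K q) := by
  show ρ K q (QuantumPlane.b K q ^ n) (Finsupp.single 0 1) = _
  rw [map_pow, ρ_b]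
  simpa using S_pow_single K n 0 1

lemma adjoin_ab :
    Algebra.adjoin K ({QuantumPlane.a K q, QuantumPlane.b K q} :
      Set (QuantumPlane K q)) = ⊤ := by
  have h1 : Algebra.adjoin K
      (⇑(RingQuot.mkAlgHom K (QuantumPlaneRel K q)) ''
        Set.range (ι K : Fin 2 → FreeAlgebra K (Fin 2))) = ⊤ := by
    rw [← AlgHom.map_adjoin, FreeAlgebra.adjoin_range_ι, Algebra.map_top,
      AlgHom.range_eq_top]
    exact RingQuot.mkAlgHom_surjective K _
  refine top_unique ?_
  rw [← h1]
  refine Algebra.adjoin_mono ?_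
  rintro _ ⟨_, ⟨i, rfl⟩, rfl⟩
  fin_cases i
  · exact Or.inl rfl
  · exact Or.inr rfl

/-- Elements of the quantum plane stabilizing a subspace on the left. -/
def leftMulStab (V : Submodule K (QuantumPlane K q)) : Subalgebra K (QuantumPlane K q) where
  carrier := {y | ∀ v ∈ V, y * v ∈ V}
  mul_mem' := fun hx hy v hv => by rw [mul_assoc]; exact hx _ (hy _ hv)
  add_mem' := fun hx hy v hv => by rw [add_mul]; exact V.add_mem (hx _ hv) (hy _ hv)
  one_mem' := fun v hv => by rw [one_mul]; exact hv
  algebraMap_mem' := fun c v hv => by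
    rw [← Algebra.smul_def]; exact V.smul_mem c hv

lemma a_mul_pow_b (n : ℕ) :
    QuantumPlane.a K q * QuantumPlane.b K q ^ n
      = q ^ n • (QuantumPlane.b K q ^ n * QuantumPlane.a K q) := by
  induction n with
  | zero => simp
  | succ n ih =>
    have hrel : QuantumPlane.a K q * QuantumPlane.b K q
        = q • (QuantumPlane.b K q * QuantumPlane.a K q) := by
      have := RingQuot.mkAlgHom_rel K (QuantumPlaneRel.rel (K := K) (q := q))
      simpa [QuantumPlane.a, QuantumPlane.b, map_mul, map_smul] using this
    calc QuantumPlane.a K q * QuantumPlane.b K q ^ (n + 1)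
        = (QuantumPlane.a K q * QuantumPlane.b K q) * QuantumPlane.b K q ^ n := by
          rw [pow_succ', ← mul_assoc]
      _ = q • (QuantumPlane.b K q * (QuantumPlane.a K q * QuantumPlane.b K q ^ n)) := by
          rw [hrel, smul_mul_assoc, mul_assoc]
      _ = q ^ (n+1) • (QuantumPlane.b K q ^ (n+1) * QuantumPlane.a K q) := by
          rw [ih, mul_smul_comm, smul_smul, ← pow_succ', ← mul_assoc, ← pow_succ']

/-- The left ideal `J = B(a-1)`. -/
def J : Submodule (QuantumPlane K q) (QuantumPlane K q) :=
  Ideal.span {QuantumPlane.a K q - 1}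

lemma pow_b_mul_a_sub_one_mem (n : ℕ) :
    QuantumPlane.b K q ^ n * (QuantumPlane.a K q - 1) ∈ J K q := by
  have h : QuantumPlane.a K q - 1 ∈ J K q := Submodule.subset_span rfl
  simpa [smul_eq_mul] using (J K q).smul_mem (QuantumPlane.b K q ^ n) h

/-- Every element of `B` is a polynomial in `b` modulo `J`. -/
lemma mem_poly_sup_J (x : QuantumPlane K q) :
    x ∈ (Submodule.span K (Set.range fun n : ℕ => QuantumPlane.b K q ^ n)) ⊔
      (J K q).restrictScalars K := by
  set V : Submodule K (QuantumPlane K q) :=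
    (Submodule.span K (Set.range fun n : ℕ => QuantumPlane.b K q ^ n)) ⊔
      (J K q).restrictScalars K with hV
  have hmemJ : ∀ y, ∀ j ∈ (J K q).restrictScalars K, y * j ∈ V := by
    intro y j hj
    have : y * j ∈ (J K q).restrictScalars K := by
      simpa [smul_eq_mul] using (J K q).smul_mem y hj
    exact (le_sup_right : (J K q).restrictScalars K ≤ V) this
  have ha : QuantumPlane.a K q ∈ leftMulStab K q V := by
    intro v hv
    rw [hV] at hv
    rcases Submodule.mem_sup.mp hv with ⟨p, hp, j, hj, rfl⟩
    rw [mul_add]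
    refine V.add_mem ?_ (hmemJ _ j hj)
    refine Submodule.span_induction
      (p := fun u _ => QuantumPlane.a K q * u ∈ V) ?_ ?_ ?_ ?_ hp
    · rintro _ ⟨n, rfl⟩
      have : QuantumPlane.a K q * QuantumPlane.b K q ^ n
          = q ^ n • (QuantumPlane.b K q ^ n * (QuantumPlane.a K q - 1))
            + q ^ n • QuantumPlane.b K q ^ n := by
        rw [a_mul_pow_b, mul_sub, mul_one, smul_sub, sub_add_cancel]
      rw [this]
      refine V.add_mem ?_ ?_
      · refine V.smul_mem _ ?_
        have : QuantumPlane.b K q ^ n * (QuantumPlane.a K q - 1) ∈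
            (J K q).restrictScalars K := pow_b_mul_a_sub_one_mem K q n
        exact (le_sup_right : (J K q).restrictScalars K ≤ V) this
      · refine V.smul_mem _ ?_
        exact (le_sup_left :
          Submodule.span K (Set.range fun n : ℕ => QuantumPlane.b K q ^ n) ≤ V)
          (Submodule.subset_span ⟨n, rfl⟩)
    · simp
    · intro u w _ _ hu hw
      rw [mul_add]; exact V.add_mem hu hw
    · intro c u _ hu
      rw [mul_smul_comm]; exact V.smul_mem c hu
  have hb : QuantumPlane.b K q ∈ leftMulStab K q V := by
    intro v hv
    rw [hV] at hv
    rcases Submodule.mem_sup.mp hv with ⟨p, hp, j, hj, rfl⟩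
    rw [mul_add]
    refine V.add_mem ?_ (hmemJ _ j hj)
    refine Submodule.span_induction
      (p := fun u _ => QuantumPlane.b K q * u ∈ V) ?_ ?_ ?_ ?_ hp
    · rintro _ ⟨n, rfl⟩
      have : QuantumPlane.b K q * QuantumPlane.b K q ^ n = QuantumPlane.b K q ^ (n+1) := by
        rw [pow_succ']
      rw [this]
      exact (le_sup_left :
        Submodule.span K (Set.range fun n : ℕ => QuantumPlane.b K q ^ n) ≤ V)
        (Submodule.subset_span ⟨n+1, rfl⟩)
    · simp
    · intro u w _ _ hu hw
      rw [mul_add]; exact V.add_mem hu hw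
    · intro c u _ hu
      rw [mul_smul_comm]; exact V.smul_mem c hu
  have hT : leftMulStab K q V = ⊤ := by
    rw [eq_top_iff, ← adjoin_ab K q]
    refine Algebra.adjoin_le ?_
    rintro y (rfl | rfl)
    · exact ha
    · exact hb
  have hx : x ∈ leftMulStab K q V := hT ▸ Algebra.mem_top
  have h1 : (1 : QuantumPlane K q) ∈ V := by
    refine (le_sup_left :
      Submodule.span K (Set.range fun n : ℕ => QuantumPlane.b K q ^ n) ≤ V)
      (Submodule.subset_span ⟨0, by simp⟩)
  simpa using hx 1 h1

end QPaux

namespace QPaux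

variable (K : Type) [Field K] (q : K)

/-- The "polynomials in `b`" embedding. -/
def e : (ℕ →₀ K) →ₗ[K] QuantumPlane K q :=
  Finsupp.linearCombination K (fun n : ℕ => QuantumPlane.b K q ^ n)

lemma ψ_e (f : ℕ →₀ K) : ψ K q (e K q f) = (f : Mq K q) := by
  induction f using Finsupp.induction_linear with
  | zero => simp [e]; rfl
  | add f g hf hg =>
    rw [map_add, map_add, hf, hg]; rfl
  | single n c =>
    rw [e, Finsupp.linearCombination_single]
    have : c • QuantumPlane.b K q ^ n
        = algebraMap K (QuantumPlane K q) c * QuantumPlane.b K q ^ n := by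
      rw [Algebra.smul_def]
    rw [this]
    have hmul : ψ K q (algebraMap K (QuantumPlane K q) c * QuantumPlane.b K q ^ n)
        = algebraMap K (QuantumPlane K q) c • ψ K q (QuantumPlane.b K q ^ n) := by
      rw [← smul_eq_mul, map_smul]
    rw [hmul, ψ_pow_b]; refine (algebraMap_smul_mq K q c _).trans ?_
    show c • (Finsupp.single n 1 : ℕ →₀ K) = _
    simp

lemma J_le_ker : J K q ≤ LinearMap.ker (ψ K q) := by
  rw [J, Ideal.span, Submodule.span_le]
  rintro _ rfl
  simp only [SetLike.mem_coe, LinearMap.mem_ker]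
  show ρ K q (QuantumPlane.a K q - 1) (Finsupp.single 0 1) = 0
  rw [map_sub, LinearMap.sub_apply, ρ_a, A_single]
  simp

lemma ker_le_J : LinearMap.ker (ψ K q) ≤ J K q := by
  intro x hx
  rcases Submodule.mem_sup.mp (mem_poly_sup_J K q x) with ⟨p, hp, j, hj, rfl⟩
  have hpe : ∃ f : ℕ →₀ K, e K q f = p := by
    have : p ∈ LinearMap.range (e K q) := by
      rw [e, Finsupp.range_linearCombination]; exact hp
    exact this
  rcases hpe with ⟨f, rfl⟩
  have hj0 : ψ K q j = 0 := J_le_ker K q hj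
  have : ψ K q (e K q f) = 0 := by
    have := LinearMap.mem_ker.mp hx
    rw [map_add, hj0, add_zero] at this
    exact this
  rw [ψ_e] at this
  have : f = 0 := this
  rw [this, map_zero, zero_add]
  exact hj

lemma ker_eq_J : LinearMap.ker (ψ K q) = J K q :=
  le_antisymm (ker_le_J K q) (J_le_ker K q)

/-- The quotient map `W = B/J → Mq`. -/
def φ0 : (QuantumPlane K q ⧸ J K q) →ₗ[QuantumPlane K q] Mq K q :=
  Submodule.liftQ (J K q) (ψ K q) (J_le_ker K q)

lemma φ0_bij : Function.Bijective (φ0 K q) := by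
  constructor
  · rw [← LinearMap.ker_eq_bot, φ0, Submodule.ker_liftQ_eq_bot]
    rw [ker_eq_J]
  · intro f
    exact ⟨Submodule.Quotient.mk (e K q f), by
      rw [φ0, Submodule.liftQ_apply]; exact ψ_e K q f⟩

/-- The `B`-module isomorphism `W ≃ Mq`. -/
def φ : (QuantumPlane K q ⧸ J K q) ≃ₗ[QuantumPlane K q] Mq K q :=
  LinearEquiv.ofBijective (φ0 K q) (φ0_bij K q)

lemma φ_mk_pow_b (n : ℕ) :
    φ K q (Submodule.Quotient.mk (QuantumPlane.b K q ^ n))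
      = (Finsupp.single n 1 : Mq K q) := by
  show φ0 K q (Submodule.Quotient.mk (QuantumPlane.b K q ^ n)) = _
  rw [φ0, Submodule.liftQ_apply, ψ_pow_b]

end QPaux

namespace QPaux

variable (K : Type) [Field K] (q : K)

/-- Identity map viewing an element of `Mq` as a finsupp. -/
def toF (f : Mq K q) : ℕ →₀ K := f

/-- `single` as an element of `Mq`. -/
def sgl (n : ℕ) (c : K) : Mq K q := Finsupp.single n c

lemma toF_sgl (n : ℕ) (c : K) : toF K q (sgl K q n c) = Finsupp.single n c := rfl

lemma ψ_pow_b' (n : ℕ) : ψ K q (QuantumPlane.b K q ^ n) = sgl K q n 1 := ψ_pow_b K q n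

lemma ρ_mem_adjoin (x : QuantumPlane K q) :
    ρ K q x ∈ Algebra.adjoin K ({A K q, S K} : Set (Module.End K (ℕ →₀ K))) := by
  have hx : x ∈ Algebra.adjoin K
      ({QuantumPlane.a K q, QuantumPlane.b K q} : Set (QuantumPlane K q)) := by
    rw [adjoin_ab]; exact Algebra.mem_top
  have hmap : ρ K q x ∈ (Algebra.adjoin K
      ({QuantumPlane.a K q, QuantumPlane.b K q} : Set (QuantumPlane K q))).map (ρ K q) :=
    ⟨x, hx, rfl⟩
  rw [AlgHom.map_adjoin, Set.image_pair, ρ_a, ρ_b] at hmap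
  exact hmap

/-- Endomorphisms preserving a subspace. -/
def stabAlg (V : Submodule K (ℕ →₀ K)) : Subalgebra K (Module.End K (ℕ →₀ K)) where
  carrier := {g | ∀ f ∈ V, g f ∈ V}
  mul_mem' := fun hx hy f hf => hx _ (hy _ hf)
  add_mem' := fun hx hy f hf => by
    rw [LinearMap.add_apply]; exact V.add_mem (hx _ hf) (hy _ hf)
  one_mem' := fun f hf => hf
  algebraMap_mem' := fun c f hf => by
    show algebraMap K (Module.End K (ℕ →₀ K)) c f ∈ V
    rw [Module.algebraMap_end_apply]
    exact V.smul_mem c hf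

lemma stab (V : Submodule K (ℕ →₀ K))
    (hA : ∀ f ∈ V, A K q f ∈ V) (hS : ∀ f ∈ V, S K f ∈ V)
    (x : QuantumPlane K q) {f : ℕ →₀ K} (hf : f ∈ V) : ρ K q x f ∈ V := by
  have hAS : Algebra.adjoin K ({A K q, S K} : Set (Module.End K (ℕ →₀ K)))
      ≤ stabAlg K V := by
    refine Algebra.adjoin_le ?_
    rintro g (rfl | rfl)
    · exact hA
    · exact hS
  exact hAS (ρ_mem_adjoin K q x) f hf

/-- The subspace of sequences vanishing below `m`, as a K-subspace. -/
def Vlow0 (m : ℕ) : Submodule K (ℕ →₀ K) where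
  carrier := {f | ∀ k, k < m → f k = 0}
  add_mem' := fun hf hg k hk => by
    rw [Finsupp.add_apply, hf k hk, hg k hk, add_zero]
  zero_mem' := fun k _ => rfl
  smul_mem' := fun c f hf k hk => by
    rw [Finsupp.smul_apply, hf k hk, smul_zero]

lemma Vlow0_A {m : ℕ} : ∀ f ∈ Vlow0 K m, A K q f ∈ Vlow0 K m := by
  intro f hf k hk
  have : A K q f k = q ^ k * f k := A_apply K q f k
  rw [show (A K q f) k = q ^ k * f k from this, hf k hk, mul_zero]

lemma Vlow0_S {m : ℕ} : ∀ f ∈ Vlow0 K m, S K f ∈ Vlow0 K m := by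
  intro f hf k hk
  cases k with
  | zero => exact S_apply_zero K f
  | succ k =>
    rw [S_apply_succ]
    exact hf k (lt_of_le_of_lt (Nat.le_succ k) hk)

/-- The subspace of sequences vanishing below `m`, as a `B`-submodule of `Mq`. -/
def Vlow (m : ℕ) : Submodule (QuantumPlane K q) (Mq K q) where
  carrier := {f | toF K q f ∈ Vlow0 K m}
  add_mem' := fun hf hg => (Vlow0 K m).add_mem hf hg
  zero_mem' := (Vlow0 K m).zero_mem
  smul_mem' := fun c {f} hf =>
    stab K q (Vlow0 K m) (Vlow0_A K q) (Vlow0_S K) c hf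

lemma mem_Vlow {m : ℕ} {f : Mq K q} :
    f ∈ Vlow K q m ↔ ∀ k, k < m → toF K q f k = 0 := Iff.rfl

/-- The submodule generated by `single n 1`. -/
def Wn (n : ℕ) : Submodule (QuantumPlane K q) (Mq K q) :=
  Submodule.span (QuantumPlane K q) {sgl K q n 1}

lemma single_mem_Wn {n k : ℕ} (h : n ≤ k) (c : K) :
    sgl K q k c ∈ Wn K q n := by
  have hb : (QuantumPlane.b K q ^ (k - n)) • sgl K q n 1 = sgl K q k 1 := by
    rw [smul_mq, map_pow, ρ_b]
    show ((S K) ^ (k - n)) (Finsupp.single n 1) = (Finsupp.single k 1 : ℕ →₀ K)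
    rw [S_pow_single, Nat.add_sub_cancel' h]
  have h1 : sgl K q k 1 ∈ Wn K q n := by
    rw [← hb]
    exact Submodule.smul_mem _ _ (Submodule.subset_span rfl)
  have h2 := Submodule.smul_mem _ (algebraMap K (QuantumPlane K q) c) h1
  rw [algebraMap_smul_mq] at h2
  have h3 : c • sgl K q k 1 = sgl K q k c := by
    show c • (Finsupp.single k 1 : ℕ →₀ K) = Finsupp.single k c
    simp
  rwa [h3] at h2

lemma mq_sum_single (f : Mq K q) :
    f = ∑ k ∈ (toF K q f).support, sgl K q k (toF K q f k) := by
  show toF K q f = ∑ k ∈ (toF K q f).support, Finsupp.single k (toF K q f k)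
  exact (Finsupp.sum_single (toF K q f)).symm

lemma mem_Wn_of_low {n : ℕ} {f : Mq K q} (hf : ∀ k, k < n → toF K q f k = 0) :
    f ∈ Wn K q n := by
  rw [mq_sum_single K q f]
  refine Submodule.sum_mem _ ?_
  intro k hk
  have hfk : toF K q f k ≠ 0 := Finsupp.mem_support_iff.mp hk
  have hnk : n ≤ k := by
    by_contra hlt
    exact hfk (hf k (Nat.lt_of_not_le hlt))
  exact single_mem_Wn K q hnk _

lemma Wn_le_Vlow (n : ℕ) : Wn K q n ≤ Vlow K q n := by
  rw [Wn, Submodule.span_le]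
  rintro _ rfl
  rw [SetLike.mem_coe, mem_Vlow]
  intro k hk
  rw [toF_sgl]
  exact Finsupp.single_eq_of_ne' (Nat.ne_of_gt hk)

lemma Wn_zero : Wn K q 0 = ⊤ := by
  rw [eq_top_iff]
  intro f _
  exact mem_Wn_of_low K q (fun k hk => absurd hk (Nat.not_lt_zero k))

lemma Wn_succ_lt (n : ℕ) : Wn K q (n + 1) < Wn K q n := by
  have hle : Wn K q (n + 1) ≤ Wn K q n :=
    Submodule.span_le.mpr (by rintro _ rfl; exact single_mem_Wn K q (Nat.le_succ n) 1)
  refine lt_of_le_of_ne hle (fun heq => ?_)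
  have h1 : sgl K q n 1 ∈ Wn K q (n + 1) := by
    rw [heq]; exact Submodule.subset_span rfl
  have h2 := (mem_Vlow K q).mp (Wn_le_Vlow K q (n + 1) h1) n (Nat.lt_succ_self n)
  rw [toF_sgl, Finsupp.single_eq_same] at h2
  exact one_ne_zero h2

lemma Wn_strictAnti : StrictAnti (Wn K q) :=
  strictAnti_nat_of_succ_lt (Wn_succ_lt K q)

end QPaux

namespace QPaux

variable (K : Type) [Field K] (q : K)

lemma pow_inj (hq0 : q ≠ 0) (hq : ∀ k : ℕ, 0 < k → q ^ k ≠ 1)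
    {k m : ℕ} (h : q ^ k = q ^ m) : k = m := by
  have key : ∀ {k m : ℕ}, k ≤ m → q ^ k = q ^ m → k = m := by
    intro k m hkm h
    by_contra hne
    have : q ^ k * q ^ (m - k) = q ^ k * 1 := by
      rw [← pow_add, Nat.add_sub_cancel' hkm, ← h, mul_one]
    have h1 : q ^ (m - k) = 1 := mul_left_cancel₀ (pow_ne_zero k hq0) this
    have hlt : k < m := lt_of_le_of_ne hkm hne
    exact hq (m - k) (by omega) h1
  rcases le_total k m with hkm | hmk
  · exact key hkm h
  · exact (key hmk h.symm).symm

lemma eigen_single_mem (hq0 : q ≠ 0) (hq : ∀ k : ℕ, 0 < k → q ^ k ≠ 1)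
    (N : Submodule (QuantumPlane K q) (Mq K q)) :
    ∀ s : ℕ, ∀ f ∈ N, (toF K q f).support.card ≤ s →
      ∀ m, sgl K q m (toF K q f m) ∈ N := by
  intro s
  induction s with
  | zero =>
    intro f _ hcard m
    have h0 : toF K q f = 0 :=
      Finsupp.support_eq_empty.mp (Finset.card_eq_zero.mp (Nat.le_zero.mp hcard))
    have hz : sgl K q m (toF K q f m) = (0 : Mq K q) := by
      show (Finsupp.single m (toF K q f m) : ℕ →₀ K) = 0
      rw [h0]; simp
    rw [hz]; exact N.zero_mem
  | succ s ih =>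
    intro f hf hcard m
    by_cases hm : m ∈ (toF K q f).support
    · set g : Mq K q := QuantumPlane.a K q • f
        - algebraMap K (QuantumPlane K q) (q ^ m) • f with hgdef
      have hgN : g ∈ N := N.sub_mem (N.smul_mem _ hf) (N.smul_mem _ hf)
      have h1 : toF K q (QuantumPlane.a K q • f) = A K q (toF K q f) := by
        show ρ K q (QuantumPlane.a K q) (toF K q f) = _
        rw [ρ_a]
      have h2 : toF K q (algebraMap K (QuantumPlane K q) (q ^ m) • f)
          = q ^ m • toF K q f := congrArg (toF K q) (algebraMap_smul_mq K q (q ^ m) f)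
      have h3 : toF K q g = A K q (toF K q f) - q ^ m • toF K q f := by
        show toF K q (QuantumPlane.a K q • f)
          - toF K q (algebraMap K (QuantumPlane K q) (q ^ m) • f) = _
        rw [h1, h2]
      have hg_apply : ∀ k, toF K q g k = (q ^ k - q ^ m) * toF K q f k := by
        intro k
        rw [h3, Finsupp.sub_apply, A_apply, Finsupp.smul_apply, smul_eq_mul, sub_mul]
      have hsupp : (toF K q g).support = (toF K q f).support.erase m := by
        ext k
        simp only [Finsupp.mem_support_iff, Finset.mem_erase, hg_apply, mul_ne_zero_iff,
          sub_ne_zero]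
        exact and_congr_left' (not_congr ⟨pow_inj K q hq0 hq, fun h => by rw [h]⟩)
      have hcard' : (toF K q g).support.card ≤ s := by
        rw [hsupp]
        have := Finset.card_erase_of_mem hm
        omega
      have hsing : ∀ k, sgl K q k (toF K q g k) ∈ N := fun k => ih g hgN hcard' k
      have hfk : ∀ k ∈ (toF K q f).support.erase m, sgl K q k (toF K q f k) ∈ N := by
        intro k hk
        have hkm : k ≠ m := (Finset.mem_erase.mp hk).1
        have hne : q ^ k - q ^ m ≠ 0 :=
          sub_ne_zero.mpr (fun h => hkm (pow_inj K q hq0 hq h))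
        have h4 := N.smul_mem
          (algebraMap K (QuantumPlane K q) (q ^ k - q ^ m)⁻¹) (hsing k)
        rw [algebraMap_smul_mq] at h4
        have h5 : (q ^ k - q ^ m)⁻¹ • sgl K q k (toF K q g k)
            = sgl K q k (toF K q f k) := by
          show (q ^ k - q ^ m)⁻¹ • (Finsupp.single k (toF K q g k) : ℕ →₀ K)
            = Finsupp.single k (toF K q f k)
          rw [Finsupp.smul_single, hg_apply, smul_eq_mul, ← mul_assoc,
            inv_mul_cancel₀ hne, one_mul]
        rwa [h5] at h4
      have hdecomp : f - ∑ k ∈ (toF K q f).support.erase m, sgl K q k (toF K q f k)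
          = sgl K q m (toF K q f m) := by
        have hsum : (Finsupp.single m (toF K q f m) : ℕ →₀ K)
            + ∑ k ∈ (toF K q f).support.erase m, Finsupp.single k (toF K q f k)
            = ∑ k ∈ (toF K q f).support, Finsupp.single k (toF K q f k) :=
          Finset.add_sum_erase _ _ hm
        show toF K q f - ∑ k ∈ (toF K q f).support.erase m,
            Finsupp.single k (toF K q f k) = Finsupp.single m (toF K q f m)
        rw [sub_eq_iff_eq_add, hsum]
        exact (Finsupp.sum_single (toF K q f)).symm
      rw [← hdecomp]
      exact N.sub_mem hf (Submodule.sum_mem _ hfk)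
    · have h0 : toF K q f m = 0 := Finsupp.notMem_support_iff.mp hm
      have hz : sgl K q m (toF K q f m) = (0 : Mq K q) := by
        show (Finsupp.single m (toF K q f m) : ℕ →₀ K) = 0
        rw [h0, Finsupp.single_zero]
      rw [hz]; exact N.zero_mem

lemma sgl_one_mem (hq0 : q ≠ 0) (hq : ∀ k : ℕ, 0 < k → q ^ k ≠ 1)
    (N : Submodule (QuantumPlane K q) (Mq K q)) {f : Mq K q} (hf : f ∈ N)
    {m : ℕ} (hm : toF K q f m ≠ 0) : sgl K q m 1 ∈ N := by
  have h1 := eigen_single_mem K q hq0 hq N (toF K q f).support.card f hf le_rfl m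
  have h2 := N.smul_mem (algebraMap K (QuantumPlane K q) (toF K q f m)⁻¹) h1
  rw [algebraMap_smul_mq] at h2
  have h3 : (toF K q f m)⁻¹ • sgl K q m (toF K q f m) = sgl K q m 1 := by
    show (toF K q f m)⁻¹ • (Finsupp.single m (toF K q f m) : ℕ →₀ K)
      = Finsupp.single m 1
    rw [Finsupp.smul_single, smul_eq_mul, inv_mul_cancel₀ hm]
  rwa [h3] at h2

lemma exists_Wn (hq0 : q ≠ 0) (hq : ∀ k : ℕ, 0 < k → q ^ k ≠ 1)
    (N : Submodule (QuantumPlane K q) (Mq K q)) (hN : N ≠ ⊥) :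
    ∃ n : ℕ, N = Wn K q n := by
  have hex : ∃ m : ℕ, sgl K q m 1 ∈ N := by
    rcases (Submodule.ne_bot_iff N).mp hN with ⟨f, hf, hf0⟩
    have hne : toF K q f ≠ 0 := hf0
    rcases Finsupp.support_nonempty_iff.mpr hne with ⟨m, hm⟩
    exact ⟨m, sgl_one_mem K q hq0 hq N hf (Finsupp.mem_support_iff.mp hm)⟩
  set n := sInf {m : ℕ | sgl K q m 1 ∈ N} with hn
  refine ⟨n, le_antisymm ?_ ?_⟩
  · intro f hf
    refine mem_Wn_of_low K q (fun k hk => ?_)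
    by_contra hfk
    have hkmem : k ∈ {m : ℕ | sgl K q m 1 ∈ N} :=
      sgl_one_mem K q hq0 hq N hf hfk
    exact absurd hk (Nat.not_lt.mpr (Nat.sInf_le hkmem))
  · rw [Wn, Submodule.span_le]
    rintro _ rfl
    exact Nat.sInf_mem hex

end QPaux


/-- In the quantum plane `B = B(q)` with `q` not a root of unity, let `J = B(a-1)`,
`W = B/J`, `w_n = bⁿ + J` and `W_n = B·w_n`.  Then `W = W_0 ⊋ W_1 ⊋ W_2 ⊋ ⋯` is a
strictly descending chain and every nonzero `B`-submodule of `W` equals some `W_n`;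
in particular the submodules of `W` are linearly ordered by inclusion. -/
theorem quantumPlane_W_submodules (K : Type) [Field K] (q : K) (hq0 : q ≠ 0)
    (hq : ∀ k : ℕ, 0 < k → q ^ k ≠ 1) :
    (Submodule.span (QuantumPlane K q)
        {Submodule.Quotient.mk (p := (Ideal.span {QuantumPlane.a K q - 1} :
          Ideal (QuantumPlane K q))) (QuantumPlane.b K q ^ 0)} = ⊤) ∧
    StrictAnti (fun n : ℕ => Submodule.span (QuantumPlane K q)
        {Submodule.Quotient.mk (p := (Ideal.span {QuantumPlane.a K q - 1} :
          Ideal (QuantumPlane K q))) (QuantumPlane.b K q ^ n)}) ∧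
    (∀ N : Submodule (QuantumPlane K q)
        (QuantumPlane K q ⧸ (Ideal.span {QuantumPlane.a K q - 1} :
          Ideal (QuantumPlane K q))),
      N ≠ ⊥ → ∃ n : ℕ, N = Submodule.span (QuantumPlane K q)
        {Submodule.Quotient.mk (p := (Ideal.span {QuantumPlane.a K q - 1} :
          Ideal (QuantumPlane K q))) (QuantumPlane.b K q ^ n)}) := by
  classical
  let om := Submodule.orderIsoMapComap (QPaux.φ K q)
  have hmap : ∀ n : ℕ, om (Submodule.span (QuantumPlane K q)
      {Submodule.Quotient.mk (p := (Ideal.span {QuantumPlane.a K q - 1} :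
        Ideal (QuantumPlane K q))) (QuantumPlane.b K q ^ n)}) = QPaux.Wn K q n := by
    intro n
    show Submodule.map (QPaux.φ K q).toLinearMap _ = _
    rw [Submodule.map_span]; erw [Set.image_singleton]
    show Submodule.span _ {QPaux.φ K q (Submodule.Quotient.mk (QuantumPlane.b K q ^ n))} = _
    rw [QPaux.φ_mk_pow_b]
    rfl
  refine ⟨?_, ?_, ?_⟩
  · have h0 : om (Submodule.span (QuantumPlane K q)
        {Submodule.Quotient.mk (p := (Ideal.span {QuantumPlane.a K q - 1} :
          Ideal (QuantumPlane K q))) (QuantumPlane.b K q ^ 0)}) = om ⊤ := by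
      rw [hmap 0, QPaux.Wn_zero]
      exact om.map_top.symm
    exact om.injective h0
  · intro m n hmn
    have := QPaux.Wn_strictAnti K q hmn
    rw [← hmap m, ← hmap n] at this
    exact om.lt_iff_lt.mp this
  · intro N hN
    have hN' : om N ≠ ⊥ := by
      intro h
      apply hN
      have : om N = om ⊥ := by rw [h]; exact (OrderIso.map_bot om).symm
      exact om.injective this
    rcases QPaux.exists_Wn K q hq0 hq (om N) hN' with ⟨n, hn⟩
    refine ⟨n, om.injective ?_⟩
    rw [hn]; exact (hmap n).symm

end
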